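/- There exists a constant C > 0 (depending only on q, H, and β) such that for all n ≥ 1, every configuration σ ∈ Λ^n, every vertex i ∈ {1,…,n}, and every k ∈ {1,…,q}, the Glauber update probability satisfies | P(σ → σ_{i,e^k}) − [∂_kΓ]( −β∇H(L_n(σ)) − (β/(2n)) 𝒬H(L_n(σ)) + (β/n) ⟨σ_i, 𝒬H(L_n(σ))⟩ σ_i ) | ≤ C/n², where 𝒬F(z) := (∂₁²F(z), ∂₂²F(z), …, ∂_q²F(z)) for F : ℝ^q → ℝ of class C². -/

import Mathlib

noncomputable section

/-- Empirical measure (magnetization vector): `L_n(ω)_k = (1/n)Σ_i 1{ω_i = e^k}`. -/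
def empMeas (q n : ℕ) (ω : Fin n → Fin q) (k : Fin q) : ℝ :=
  (∑ i : Fin n, if ω i = k then (1 : ℝ) else 0) / n

/-- Interaction representation function of coordinate-split form
`H(z) = H₁(z₁) + … + H_q(z_q)`. -/
def Hsplit (q : ℕ) (Hk : Fin q → ℝ → ℝ) (z : Fin q → ℝ) : ℝ := ∑ k, Hk k (z k)

/-- The Glauber update probability
`P(σ → σ_{i,e^k}) = exp(−βn H(L_n(σ_{i,e^k}))) / Σ_ℓ exp(−βn H(L_n(σ_{i,e^ℓ})))`. -/
def updProb (q : ℕ) (Hk : Fin q → ℝ → ℝ) (β : ℝ) (n : ℕ)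
    (σ : Fin n → Fin q) (i : Fin n) (k : Fin q) : ℝ :=
  Real.exp (-β * n * Hsplit q Hk (empMeas q n (Function.update σ i k))) /
    ∑ l : Fin q, Real.exp (-β * n * Hsplit q Hk (empMeas q n (Function.update σ i l)))

/-- `[∂_kΓ](z) = e^{z_k}/Σ_j e^{z_j}`, the gradient of the log moment generating
function `Γ(z) = log((1/q)Σ_k e^{z_k})`. -/
def gammaGrad (q : ℕ) (z : Fin q → ℝ) (k : Fin q) : ℝ :=
  Real.exp (z k) / ∑ j : Fin q, Real.exp (z j)

/-! ### Auxiliary lemmas -/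

lemma sum_exp_pos {q : ℕ} (hq : 0 < q) (z : Fin q → ℝ) :
    0 < ∑ j : Fin q, Real.exp (z j) := by
  have : Nonempty (Fin q) := ⟨⟨0, hq⟩⟩
  exact Finset.sum_pos (fun j _ => Real.exp_pos _) Finset.univ_nonempty

lemma gammaGrad_nonneg {q : ℕ} (hq : 0 < q) (z : Fin q → ℝ) (k : Fin q) :
    0 ≤ gammaGrad q z k :=
  div_nonneg (Real.exp_pos _).le (sum_exp_pos hq z).le

lemma gammaGrad_le_one {q : ℕ} (hq : 0 < q) (z : Fin q → ℝ) (k : Fin q) :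
    gammaGrad q z k ≤ 1 := by
  rw [gammaGrad, div_le_one (sum_exp_pos hq z)]
  exact Finset.single_le_sum (fun j _ => (Real.exp_pos (z j)).le) (Finset.mem_univ k)

lemma gammaGrad_shift {q : ℕ} (z : Fin q → ℝ) (c : ℝ) (k : Fin q) :
    gammaGrad q (fun l => z l + c) k = gammaGrad q z k := by
  unfold gammaGrad
  have h : ∀ l : Fin q, Real.exp (z l + c) = Real.exp (z l) * Real.exp c := fun l =>
    Real.exp_add _ _
  simp only [h, ← Finset.sum_mul]
  rw [mul_div_mul_right _ _ (Real.exp_ne_zero c)]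

lemma gammaGrad_le_exp_mul {q : ℕ} (hq : 0 < q) (a b : Fin q → ℝ) (k : Fin q) {ε : ℝ}
    (hab : ∀ l, |a l - b l| ≤ ε) :
    gammaGrad q a k ≤ Real.exp (2 * ε) * gammaGrad q b k := by
  have hA := sum_exp_pos hq a
  have hB := sum_exp_pos hq b
  rw [gammaGrad, gammaGrad, ← mul_div_assoc, div_le_div_iff₀ hA hB]
  have h1 : Real.exp (a k) ≤ Real.exp ε * Real.exp (b k) := by
    rw [← Real.exp_add]
    exact Real.exp_le_exp.2 (by have := (abs_le.1 (hab k)).2; linarith)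
  have h2 : (∑ j : Fin q, Real.exp (b j)) ≤ Real.exp ε * ∑ j : Fin q, Real.exp (a j) := by
    rw [Finset.mul_sum]
    refine Finset.sum_le_sum fun j _ => ?_
    rw [← Real.exp_add]
    exact Real.exp_le_exp.2 (by have := (abs_le.1 (hab j)).1; linarith)
  calc Real.exp (a k) * ∑ j : Fin q, Real.exp (b j)
      ≤ (Real.exp ε * Real.exp (b k)) * (Real.exp ε * ∑ j : Fin q, Real.exp (a j)) :=
        mul_le_mul h1 h2 hB.le (by positivity)
    _ = Real.exp (2 * ε) * Real.exp (b k) * ∑ j : Fin q, Real.exp (a j) := by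
        rw [two_mul, Real.exp_add]; ring

lemma gammaGrad_compare {q : ℕ} (hq : 0 < q) (a b : Fin q → ℝ) (k : Fin q) {ε : ℝ}
    (hε : 0 ≤ ε) (hab : ∀ l, |a l - b l| ≤ ε) :
    |gammaGrad q a k - gammaGrad q b k| ≤ Real.exp (2 * ε) - 1 := by
  have hexp1 : (1 : ℝ) ≤ Real.exp (2 * ε) := Real.one_le_exp (by positivity)
  have h1 := gammaGrad_le_exp_mul hq a b k hab
  have h2 := gammaGrad_le_exp_mul hq b a k (fun l => by rw [abs_sub_comm]; exact hab l)
  have hb1 := gammaGrad_le_one hq b k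
  have hb0 := gammaGrad_nonneg hq b k
  have ha1 := gammaGrad_le_one hq a k
  have ha0 := gammaGrad_nonneg hq a k
  rw [abs_sub_le_iff]
  constructor
  · nlinarith
  · nlinarith

/-- Second order Taylor expansion with uniform third-derivative bound, on `[-1,2]`. -/
lemma taylor_two_bound (f : ℝ → ℝ) (hf : ContDiff ℝ 3 f) {M : ℝ}
    (hM : ∀ t ∈ Set.Icc (-1:ℝ) 2, |deriv (deriv (deriv f)) t| ≤ M)
    {x h : ℝ} (hx : x ∈ Set.Icc (-1:ℝ) 2) (hxh : x + h ∈ Set.Icc (-1:ℝ) 2) :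
    |f (x + h) - f x - deriv f x * h - deriv (deriv f) x * h ^ 2 / 2| ≤ M * |h| ^ 3 := by
  have hM0 : 0 ≤ M := le_trans (abs_nonneg _) (hM 0 (by constructor <;> norm_num))
  have hd1 : ContDiff ℝ 2 (deriv f) := by
    have h3 : ContDiff ℝ ((2 : ℕ∞) + 1) f := by exact_mod_cast hf
    exact (contDiff_succ_iff_deriv.mp h3).2.2
  have hd2 : ContDiff ℝ 1 (deriv (deriv f)) := by
    have h2 : ContDiff ℝ ((1 : ℕ∞) + 1) (deriv f) := by exact_mod_cast hd1
    exact (contDiff_succ_iff_deriv.mp h2).2.2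
  have hdiff_f : Differentiable ℝ f := hf.differentiable (by norm_num)
  have hdiff_d1 : Differentiable ℝ (deriv f) := hd1.differentiable (by norm_num)
  have hdiff_d2 : Differentiable ℝ (deriv (deriv f)) := hd2.differentiable (by norm_num)
  set s : Set ℝ := Set.uIcc x (x + h) with hs
  have hconv : Convex ℝ s := convex_uIcc _ _
  have hsub : s ⊆ Set.Icc (-1:ℝ) 2 := by
    rw [hs, ← Set.uIcc_of_le (by norm_num : (-1:ℝ) ≤ 2)]
    refine Set.uIcc_subset_uIcc ?_ ?_ <;>
      rw [Set.uIcc_of_le (by norm_num : (-1:ℝ) ≤ 2)]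
    · exact hx
    · exact hxh
  have hxs : x ∈ s := Set.left_mem_uIcc
  have hxhs : x + h ∈ s := Set.right_mem_uIcc
  have hyx : ∀ y ∈ s, |y - x| ≤ |h| := by
    intro y hy
    have := Set.abs_sub_left_of_mem_uIcc (a := x) (b := x + h) hy
    simpa using this
  -- Step A : Lipschitz bound on second derivative
  have stepA : ∀ y ∈ s, |deriv (deriv f) y - deriv (deriv f) x| ≤ M * |h| := by
    intro y hy
    have hMVT : ‖deriv (deriv f) y - deriv (deriv f) x‖ ≤ M * ‖y - x‖ :=
      Convex.norm_image_sub_le_of_norm_deriv_le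
        (fun t _ => hdiff_d2 t)
        (fun t ht => by simpa [Real.norm_eq_abs] using hM t (hsub ht)) hconv hxs hy
    rw [Real.norm_eq_abs, Real.norm_eq_abs] at hMVT
    calc |deriv (deriv f) y - deriv (deriv f) x| ≤ M * |y - x| := hMVT
      _ ≤ M * |h| := mul_le_mul_of_nonneg_left (hyx y hy) hM0
  -- Step B : bound on u y = f' y - f' x - f'' x (y - x)
  set u : ℝ → ℝ := fun y => deriv f y - deriv f x - deriv (deriv f) x * (y - x) with hu
  have hu_deriv : ∀ y ∈ s, HasDerivWithinAt u
      (deriv (deriv f) y - deriv (deriv f) x) s y := by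
    intro y _
    have H1 : HasDerivAt (deriv f) (deriv (deriv f) y) y := (hdiff_d1 y).hasDerivAt
    have H2 : HasDerivAt (fun t => deriv (deriv f) x * (t - x)) (deriv (deriv f) x) y := by
      have := ((hasDerivAt_id y).sub_const x).const_mul (deriv (deriv f) x)
      simpa using this
    have := (H1.sub_const (deriv f x)).sub H2
    exact this.hasDerivWithinAt
  have stepB : ∀ y ∈ s, |u y| ≤ M * |h| ^ 2 := by
    intro y hy
    have hMVT : ‖u y - u x‖ ≤ (M * |h|) * ‖y - x‖ :=
      Convex.norm_image_sub_le_of_norm_hasDerivWithin_le hu_deriv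
        (fun t ht => by simpa [Real.norm_eq_abs] using stepA t ht) hconv hxs hy
    have hux : u x = 0 := by simp [hu]
    rw [hux, sub_zero, Real.norm_eq_abs, Real.norm_eq_abs] at hMVT
    calc |u y| ≤ (M * |h|) * |y - x| := hMVT
      _ ≤ (M * |h|) * |h| := mul_le_mul_of_nonneg_left (hyx y hy) (by positivity)
      _ = M * |h| ^ 2 := by ring
  -- Step C : bound on v y = f y - f x - f' x (y-x) - f'' x (y-x)^2/2
  set v : ℝ → ℝ := fun y =>
    f y - f x - deriv f x * (y - x) - deriv (deriv f) x * (y - x) ^ 2 / 2 with hv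
  have hv_deriv : ∀ y ∈ s, HasDerivWithinAt v (u y) s y := by
    intro y _
    have H1 : HasDerivAt f (deriv f y) y := (hdiff_f y).hasDerivAt
    have H2 : HasDerivAt (fun t => deriv f x * (t - x)) (deriv f x) y := by
      have := ((hasDerivAt_id y).sub_const x).const_mul (deriv f x)
      simpa using this
    have H3 : HasDerivAt (fun t => deriv (deriv f) x * (t - x) ^ 2 / 2)
        (deriv (deriv f) x * (y - x)) y := by
      have := ((((hasDerivAt_id y).sub_const x).pow 2).const_mul (deriv (deriv f) x)).div_const 2
      exact this.congr_deriv (by simp only [id_eq, Nat.cast_ofNat, Nat.reduceSub, pow_one, mul_one]; ring)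
    have := ((H1.sub_const (f x)).sub H2).sub H3
    exact this.hasDerivWithinAt
  have stepC : ‖v (x + h) - v x‖ ≤ (M * |h| ^ 2) * ‖x + h - x‖ :=
    Convex.norm_image_sub_le_of_norm_hasDerivWithin_le hv_deriv
      (fun t ht => by simpa [Real.norm_eq_abs] using stepB t ht) hconv hxs hxhs
  have hvx : v x = 0 := by simp [hv]
  have hvxh : v (x + h) = f (x + h) - f x - deriv f x * h - deriv (deriv f) x * h ^ 2 / 2 := by
    simp [hv]
  rw [hvx, sub_zero, Real.norm_eq_abs, Real.norm_eq_abs, hvxh, add_sub_cancel_left] at stepC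
  calc |f (x + h) - f x - deriv f x * h - deriv (deriv f) x * h ^ 2 / 2|
      ≤ (M * |h| ^ 2) * |h| := stepC
    _ = M * |h| ^ 3 := by ring

lemma empMeas_mem {q n : ℕ} (hn : 1 ≤ n) (σ : Fin n → Fin q) (m : Fin q) :
    empMeas q n σ m ∈ Set.Icc (0:ℝ) 1 := by
  have hn' : (0:ℝ) < n := by exact_mod_cast hn
  rw [Set.mem_Icc]
  unfold empMeas
  constructor
  · apply div_nonneg _ hn'.le
    exact Finset.sum_nonneg fun i _ => by positivity
  · rw [div_le_one hn']
    calc (∑ i : Fin n, if σ i = m then (1:ℝ) else 0) ≤ ∑ _i : Fin n, (1:ℝ) :=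
          Finset.sum_le_sum fun i _ => by split <;> norm_num
      _ = n := by simp

lemma empMeas_update {q n : ℕ} (hn : 1 ≤ n) (σ : Fin n → Fin q) (i : Fin n) (l m : Fin q) :
    empMeas q n (Function.update σ i l) m =
      empMeas q n σ m + ((if l = m then (1:ℝ) else 0) - (if σ i = m then 1 else 0)) / n := by
  have hn' : (n:ℝ) ≠ 0 := by positivity
  unfold empMeas
  rw [← add_div]
  congr 1
  have hfun : (fun i' => if Function.update σ i l i' = m then (1:ℝ) else 0) =
      Function.update (fun i' => if σ i' = m then (1:ℝ) else 0) i (if l = m then 1 else 0) := by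
    funext i'
    by_cases hii : i' = i
    · subst hii; simp [Function.update_self]
    · simp [Function.update_of_ne hii]
  rw [hfun, Finset.sum_update_of_mem (Finset.mem_univ i)]
  rw [Finset.sum_eq_sum_sdiff_singleton_add (Finset.mem_univ i)
    (fun i' => if σ i' = m then (1:ℝ) else 0)]
  ring

/-- `e^t - 1 ≤ t e^t` for `t ≥ 0`. -/
lemma exp_sub_one_le {t : ℝ} (ht : 0 ≤ t) : Real.exp t - 1 ≤ t * Real.exp t := by
  have h1 : -t + 1 ≤ Real.exp (-t) := Real.add_one_le_exp (-t)
  have h2 : Real.exp (-t) * Real.exp t = 1 := by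
    rw [← Real.exp_add]; simp
  nlinarith [Real.exp_pos t]

set_option maxHeartbeats 1000000 in
/-- **Expansion of the Glauber update probabilities** (Lemma 6.4 in the survey).
For `H(z) = ΣH_k(z_k)` concave and `C³`, there is `C > 0` such that for all
`n ≥ 1`, `σ ∈ Λ^n`, vertex `i` and `k ∈ {1,…,q}`,
`|P(σ → σ_{i,e^k}) − [∂_kΓ](−β∇H(L_n(σ)) − (β/2n)𝒬H(L_n(σ)) + (β/n)⟨σ_i,𝒬H(L_n(σ))⟩σ_i)| ≤ C/n²`,
where `𝒬H(z) = (∂₁²H(z),…,∂_q²H(z))`. -/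
theorem glauber_update_expansion (q : ℕ) (hq : 2 ≤ q) (β : ℝ) (hβ : 0 < β)
    (Hk : Fin q → ℝ → ℝ) (hC3 : ∀ k, ContDiff ℝ 3 (Hk k))
    (hconc : ∀ k, ConcaveOn ℝ Set.univ (Hk k)) :
    ∃ C : ℝ, 0 < C ∧ ∀ n : ℕ, 1 ≤ n → ∀ (σ : Fin n → Fin q) (i : Fin n) (k : Fin q),
      |updProb q Hk β n σ i k -
        gammaGrad q
          (fun m =>
            -β * deriv (Hk m) (empMeas q n σ m)
              - (β / (2 * n)) * deriv (deriv (Hk m)) (empMeas q n σ m)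
              + (β / n) * deriv (deriv (Hk (σ i))) (empMeas q n σ (σ i)) *
                  (if m = σ i then 1 else 0))
          k| ≤ C / n ^ 2 := by
  have hq0 : 0 < q := by omega
  -- A uniform bound on the third derivatives over [-1,2]
  have hbound : ∀ k : Fin q, ∃ Mk : ℝ,
      ∀ t ∈ Set.Icc (-1:ℝ) 2, |deriv (deriv (deriv (Hk k))) t| ≤ Mk := by
    intro k
    have hd1 : ContDiff ℝ 2 (deriv (Hk k)) := by
      have h3 : ContDiff ℝ ((2 : ℕ∞) + 1) (Hk k) := by exact_mod_cast hC3 k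
      exact (contDiff_succ_iff_deriv.mp h3).2.2
    have hd2 : ContDiff ℝ 1 (deriv (deriv (Hk k))) := by
      have h2 : ContDiff ℝ ((1 : ℕ∞) + 1) (deriv (Hk k)) := by exact_mod_cast hd1
      exact (contDiff_succ_iff_deriv.mp h2).2.2
    have hd3 : Continuous (deriv (deriv (deriv (Hk k)))) :=
      (contDiff_one_iff_deriv.mp hd2).2
    obtain ⟨Mk, hMk⟩ := isCompact_Icc.exists_bound_of_continuousOn
      (hd3.continuousOn : ContinuousOn _ (Set.Icc (-1:ℝ) 2))
    exact ⟨Mk, fun t ht => by simpa [Real.norm_eq_abs] using hMk t ht⟩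
  choose M0 hM0 using hbound
  set M : ℝ := 1 + ∑ k, |M0 k| with hMdef
  have hM1 : (0:ℝ) < M := by
    have : (0:ℝ) ≤ ∑ k, |M0 k| := Finset.sum_nonneg fun k _ => abs_nonneg _
    linarith
  have hM : ∀ k : Fin q, ∀ t ∈ Set.Icc (-1:ℝ) 2, |deriv (deriv (deriv (Hk k))) t| ≤ M := by
    intro k t ht
    have h1 : M0 k ≤ ∑ k, |M0 k| :=
      le_trans (le_abs_self _) (Finset.single_le_sum (fun j _ => abs_nonneg (M0 j))
        (Finset.mem_univ k))
    have := hM0 k t ht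
    linarith
  refine ⟨4 * β * M * Real.exp (4 * β * M), by positivity, ?_⟩
  intro n hn σ i k
  have hn' : (0:ℝ) < n := by exact_mod_cast hn
  have hn1 : (1:ℝ) ≤ n := by exact_mod_cast hn
  have hnne : (n:ℝ) ≠ 0 := hn'.ne'
  set L : Fin q → ℝ := empMeas q n σ with hL
  set z : Fin q → ℝ := fun m =>
    -β * deriv (Hk m) (empMeas q n σ m)
      - (β / (2 * n)) * deriv (deriv (Hk m)) (empMeas q n σ m)
      + (β / n) * deriv (deriv (Hk (σ i))) (empMeas q n σ (σ i)) *
          (if m = σ i then 1 else 0) with hz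
  set a : Fin q → ℝ := fun l =>
    -β * (n:ℝ) * Hsplit q Hk (empMeas q n (Function.update σ i l))
      + β * (n:ℝ) * Hsplit q Hk (empMeas q n σ) with ha
  set b : Fin q → ℝ := fun l => z l - z (σ i) with hb
  -- rewrite updProb as gammaGrad a
  have h1 : updProb q Hk β n σ i k = gammaGrad q a k := by
    have := gammaGrad_shift (q := q) a (-(β * (n:ℝ) * Hsplit q Hk (empMeas q n σ))) k
    rw [← this]
    have hfun : (fun l => a l + -(β * (n:ℝ) * Hsplit q Hk (empMeas q n σ))) =
        (fun l => -β * (n:ℝ) * Hsplit q Hk (empMeas q n (Function.update σ i l))) := by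
      funext l; simp only [ha]; ring
    rw [hfun]
    rfl
  -- rewrite target as gammaGrad b
  have h2 : gammaGrad q z k = gammaGrad q b k := by
    have := gammaGrad_shift (q := q) b (z (σ i)) k
    rw [← this]
    have hfun : (fun l => b l + z (σ i)) = z := by
      funext l; simp only [hb]; ring
    rw [hfun]
  -- the key estimate
  have key : ∀ l : Fin q, |a l - b l| ≤ 2 * β * M / (n:ℝ) ^ 2 := by
    intro l
    by_cases hls : l = σ i
    · subst hls
      have hupd : Function.update σ i (σ i) = σ := Function.update_eq_self i σ
      have hal : a (σ i) = 0 := by simp only [ha, hupd]; ring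
      have hbl : b (σ i) = 0 := by simp only [hb]; ring
      rw [hal, hbl, sub_zero, abs_zero]
      positivity
    · -- Taylor expansions
      have hmem : ∀ m : Fin q, L m ∈ Set.Icc (-1:ℝ) 2 := by
        intro m
        have := empMeas_mem hn σ m
        exact ⟨by linarith [this.1], by linarith [this.2]⟩
      have hinv : (0:ℝ) < 1 / n := by positivity
      have hinv1 : (1:ℝ) / n ≤ 1 := by rw [div_le_one hn']; exact hn1
      have hmemp : ∀ m : Fin q, L m + 1 / n ∈ Set.Icc (-1:ℝ) 2 := by
        intro m
        have := empMeas_mem hn σ m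
        exact ⟨by linarith [this.1], by linarith [this.2]⟩
      have hmemm : ∀ m : Fin q, L m + -(1 / n) ∈ Set.Icc (-1:ℝ) 2 := by
        intro m
        have := empMeas_mem hn σ m
        exact ⟨by linarith [this.1], by linarith [this.2]⟩
      have ht1 := taylor_two_bound (Hk l) (hC3 l) (hM l) (hmem l) (hmemp l)
      have ht2 := taylor_two_bound (Hk (σ i)) (hC3 (σ i)) (hM (σ i)) (hmem (σ i))
        (hmemm (σ i))
      set r1 : ℝ := Hk l (L l + 1 / n) - Hk l (L l) - deriv (Hk l) (L l) * (1 / n)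
        - deriv (deriv (Hk l)) (L l) * (1 / n) ^ 2 / 2 with hr1
      set r2 : ℝ := Hk (σ i) (L (σ i) + -(1 / n)) - Hk (σ i) (L (σ i))
        - deriv (Hk (σ i)) (L (σ i)) * -(1 / n)
        - deriv (deriv (Hk (σ i))) (L (σ i)) * (-(1 / n)) ^ 2 / 2 with hr2
      have habs : |(1:ℝ)/n| = 1/n := abs_of_pos hinv
      have hr1b : |r1| ≤ M * (1/n) ^ 3 := by
        have := ht1; rw [habs] at this; exact this
      have hr2b : |r2| ≤ M * (1/n) ^ 3 := by
        have := ht2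
        rw [abs_neg, habs] at this
        exact this
      -- compute the Hsplit difference
      have hLl : empMeas q n (Function.update σ i l) l = L l + 1 / n := by
        rw [empMeas_update hn σ i l l, hL]
        have h2 : ¬(σ i = l) := fun hh => hls hh.symm
        simp [h2]
      have hLs : empMeas q n (Function.update σ i l) (σ i) = L (σ i) + -(1 / n) := by
        rw [empMeas_update hn σ i l (σ i), hL]
        simp [hls]
        ring
      have hLm : ∀ m : Fin q, m ≠ l → m ≠ σ i →
          empMeas q n (Function.update σ i l) m = L m := by
        intro m hml hms
        rw [empMeas_update hn σ i l m, hL]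
        have h1 : ¬(l = m) := fun hh => hml hh.symm
        have h2 : ¬(σ i = m) := fun hh => hms hh.symm
        simp [h1, h2]
      have hHdiff : Hsplit q Hk (empMeas q n (Function.update σ i l))
          - Hsplit q Hk (empMeas q n σ)
          = (Hk l (L l + 1 / n) - Hk l (L l))
            + (Hk (σ i) (L (σ i) + -(1 / n)) - Hk (σ i) (L (σ i))) := by
        unfold Hsplit
        rw [← Finset.sum_sub_distrib]
        rw [← Finset.sum_subset (Finset.subset_univ ({l, σ i} : Finset (Fin q)))
          (fun m _ hm => ?_)]
        · rw [Finset.sum_pair hls]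
          rw [hLl, hLs]
        · simp only [Finset.mem_insert, Finset.mem_singleton, not_or] at hm
          rw [hLm m hm.1 hm.2]
          ring
      -- put everything together
      have hab : a l - b l = -(β * (n:ℝ)) * (r1 + r2) := by
        have hblval : b l = -β * deriv (Hk l) (L l)
            - (β / (2 * n)) * deriv (deriv (Hk l)) (L l)
            + β * deriv (Hk (σ i)) (L (σ i))
            - (β / (2 * n)) * deriv (deriv (Hk (σ i))) (L (σ i)) := by
          simp only [hb, hz, if_neg hls, eq_self_iff_true, if_true, ← hL]
          ring
        have halval : a l = -(β * (n:ℝ)) *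
            ((Hk l (L l + 1 / n) - Hk l (L l))
              + (Hk (σ i) (L (σ i) + -(1 / n)) - Hk (σ i) (L (σ i)))) := by
          simp only [ha, ← hL]
          rw [show -β * (n:ℝ) * Hsplit q Hk (empMeas q n (Function.update σ i l))
              + β * (n:ℝ) * Hsplit q Hk (empMeas q n σ)
              = -(β * (n:ℝ)) * (Hsplit q Hk (empMeas q n (Function.update σ i l))
                - Hsplit q Hk (empMeas q n σ)) from by ring, hHdiff]
        rw [halval, hblval, hr1, hr2]
        field_simp
        ring
      rw [hab, abs_mul, abs_neg, abs_of_pos (by positivity : (0:ℝ) < β * n)]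
      calc β * (n:ℝ) * |r1 + r2| ≤ β * n * (M * (1/n)^3 + M * (1/n)^3) := by
            refine mul_le_mul_of_nonneg_left ?_ (by positivity)
            exact le_trans (abs_add_le r1 r2) (by linarith)
        _ = 2 * β * M / (n:ℝ) ^ 2 := by field_simp; ring
  -- conclude via the softmax comparison
  have hcmp := gammaGrad_compare hq0 a b k (by positivity : (0:ℝ) ≤ 2 * β * M / (n:ℝ)^2) key
  rw [h1, h2]
  refine le_trans hcmp ?_
  set t : ℝ := 2 * (2 * β * M / (n:ℝ) ^ 2) with htdef
  have ht0 : 0 ≤ t := by positivity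
  have htle : t ≤ 4 * β * M := by
    rw [htdef]
    have hsq : (1:ℝ) ≤ (n:ℝ)^2 := by nlinarith
    rw [show 2 * (2 * β * M / (n:ℝ)^2) = (4 * β * M) / (n:ℝ)^2 from by ring]
    exact div_le_self (by positivity) hsq
  have e1 : Real.exp t - 1 ≤ t * Real.exp t := exp_sub_one_le ht0
  have e2 : Real.exp t ≤ Real.exp (4 * β * M) := Real.exp_le_exp.2 htle
  calc Real.exp t - 1 ≤ t * Real.exp t := e1
    _ ≤ t * Real.exp (4 * β * M) := by nlinarith [Real.exp_pos t]
    _ = 4 * β * M * Real.exp (4 * β * M) / (n:ℝ) ^ 2 := by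
        rw [htdef]; field_simp; ring

end
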